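/- If there is an Nwd-Luzin family of size κ > ω₁, then there is a Luzin set (for the meager ideal on 2^ω) of size κ. -/

import Mathlib

open Set Cardinal

/-- `A ⊆ 2^{<ω}` is nowhere dense in the tree of finite binary strings. -/
def IsNwdTree (A : Set (List Bool)) : Prop :=
  ∀ s : List Bool, ∃ t : List Bool, s <+: t ∧ ∀ u ∈ A, ¬ t <+: u

/-- cylinder -/
def cylB (s : List Bool) : Set (ℕ → Bool) := {x | ∀ i, (h : i < s.length) → x i = s[i]}

def pfxL (x : ℕ → Bool) (n : ℕ) : List Bool := List.ofFn (fun i : Fin n => x i)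

@[simp] lemma pfxL_length (x : ℕ → Bool) (n : ℕ) : (pfxL x n).length = n := by
  simp [pfxL]

lemma mem_cylB_pfxL (x : ℕ → Bool) (n : ℕ) : x ∈ cylB (pfxL x n) := by
  intro i h
  simp [pfxL]

lemma cylB_mono {s t : List Bool} (h : s <+: t) : cylB t ⊆ cylB s := by
  intro x hx i hi
  have := hx i (lt_of_lt_of_le hi h.length_le)
  rw [this]
  exact (List.IsPrefix.getElem h hi).symm

lemma prefix_pfxL_of_mem_cylB {s : List Bool} {x : ℕ → Bool} (hx : x ∈ cylB s)
    {n : ℕ} (hn : s.length ≤ n) : s <+: pfxL x n := by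
  have : s = (pfxL x n).take s.length := by
    apply List.ext_getElem
    · simp [Nat.min_eq_left hn]
    · intro i h1 h2
      simp only [List.getElem_take, pfxL, List.getElem_ofFn]
      exact (hx i h1).symm
  rw [this]
  exact List.take_prefix _ _

lemma take_eq_of_prefix {s u : List Bool} (h : s <+: u) : u.take s.length = s :=
  (List.prefix_iff_eq_take.mp h).symm

/-- tree-nowhere-density of a set of branches -/
def TNwd (C : Set (ℕ → Bool)) : Prop := ∀ s : List Bool, ∃ t, s <+: t ∧ ∀ x ∈ cylB t, x ∉ C

/-- the catching nwd tree set -/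
def ANG (C : Set (ℕ → Bool)) (g : ℕ → ℕ) : Set (List Bool) :=
  {u | ∃ n, n ≤ u.length ∧ u.length ≤ g n ∧ ∃ x ∈ cylB (u.take n), x ∈ C}

lemma ANG_nwd {C : Set (ℕ → Bool)} (hC : TNwd C) (g : ℕ → ℕ) : IsNwdTree (ANG C g) := by
  intro s
  obtain ⟨t₀, hst₀, ht₀⟩ := hC s
  set L := (Finset.range t₀.length).sup g with hL
  refine ⟨t₀ ++ List.replicate (L + 1) false, hst₀.trans (List.prefix_append _ _), ?_⟩
  rintro u ⟨n, hn1, hn2, x, hx, hxC⟩ htu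
  have hlen : t₀.length + (L + 1) ≤ u.length := by
    have := htu.length_le
    simpa using this
  rcases lt_or_ge n t₀.length with h | h
  · have : g n ≤ L := Finset.le_sup (f := g) (Finset.mem_range.mpr h)
    omega
  · have ht₀u : t₀ <+: u.take n := by
      rw [List.prefix_take_iff]
      exact ⟨(List.prefix_append _ _).trans htu, h⟩
    exact ht₀ x (cylB_mono ht₀u hx) hxC

lemma bool_ne_not (b : Bool) : b ≠ !b := by cases b <;> simp

lemma TNwd_singleton (y : ℕ → Bool) : TNwd {y} := by
  intro s
  refine ⟨s ++ [!(y s.length)], List.prefix_append _ _, ?_⟩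
  rintro x hx rfl
  have h : s.length < (s ++ [!(x s.length)]).length := by simp
  have := hx s.length h
  rw [List.getElem_append_right (le_refl s.length)] at this
  simp at this

lemma exists_gt_of_infinite {S : Set ℕ} (hS : S.Infinite) (L : ℕ) : ∃ n ∈ S, L < n := by
  by_contra h
  push_neg at h
  exact hS ((Set.finite_Iic L).subset (fun n hn => h n hn))

lemma catch_lemma {X : Set (List Bool)} {C : Set (ℕ → Bool)} {x : ℕ → Bool} {g : ℕ → ℕ}
    (hxC : x ∈ C)
    (hio : {n | ∃ u ∈ X, pfxL x n <+: u ∧ u.length ≤ g n}.Infinite) :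
    (X ∩ ANG C g).Infinite := by
  intro hfin
  obtain ⟨L, hL⟩ : ∃ L, ∀ u ∈ X ∩ ANG C g, u.length ≤ L := by
    obtain ⟨L, hL⟩ := (hfin.image List.length).bddAbove
    exact ⟨L, fun u hu => hL (Set.mem_image_of_mem _ hu)⟩
  obtain ⟨n, ⟨u, huX, hpre, hlen⟩, hnL⟩ := exists_gt_of_infinite hio L
  have hn_le : n ≤ u.length := by simpa using hpre.length_le
  have hu : u ∈ X ∩ ANG C g := by
    refine ⟨huX, n, hn_le, hlen, x, ?_, hxC⟩
    have : u.take (pfxL x n).length = pfxL x n := take_eq_of_prefix hpre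
    rw [pfxL_length] at this
    rw [this]
    exact mem_cylB_pfxL x n
  exact absurd (hL u hu) (by omega)

section Branch

def extSet (X : Set (List Bool)) (s : List Bool) : Set (List Bool) := {u ∈ X | s <+: u}

lemma extSet_step {X : Set (List Bool)} {s : List Bool} (h : (extSet X s).Infinite) :
    ∃ b, (extSet X (s ++ [b])).Infinite := by
  by_contra hb
  push_neg at hb
  have hsub : extSet X s ⊆ insert s (extSet X (s ++ [true]) ∪ extSet X (s ++ [false])) := by
    rintro u ⟨huX, r, rfl⟩
    rcases r with _ | ⟨b, r'⟩
    · simp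
    · rcases b with _ | _
      · exact Set.mem_insert_iff.mpr (Or.inr (Or.inr ⟨huX, r', by simp⟩))
      · exact Set.mem_insert_iff.mpr (Or.inr (Or.inl ⟨huX, r', by simp⟩))
  exact h ((((hb true).union (hb false)).insert s).subset hsub)

noncomputable def chainB (X : Set (List Bool)) (h0 : (extSet X []).Infinite) :
    ℕ → {s : List Bool // (extSet X s).Infinite}
  | 0 => ⟨[], h0⟩
  | n + 1 =>
    let p := chainB X h0 n
    ⟨p.1 ++ [(extSet_step p.2).choose], (extSet_step p.2).choose_spec⟩

noncomputable def branchOf (X : Set (List Bool)) (h0 : (extSet X []).Infinite) : ℕ → Bool :=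
  fun n => (chainB X h0 (n + 1)).1.getD n false

lemma chainB_length (X : Set (List Bool)) (h0 : (extSet X []).Infinite) (n : ℕ) :
    (chainB X h0 n).1.length = n := by
  induction n with
  | zero => rfl
  | succ n ih => simp [chainB, ih]

lemma chainB_succ (X : Set (List Bool)) (h0 : (extSet X []).Infinite) (n : ℕ) :
    (chainB X h0 (n + 1)).1 = (chainB X h0 n).1 ++ [(extSet_step (chainB X h0 n).2).choose] := rfl

lemma branchOf_eq (X : Set (List Bool)) (h0 : (extSet X []).Infinite) (n : ℕ) :
    branchOf X h0 n = (extSet_step (chainB X h0 n).2).choose := by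
  show (chainB X h0 (n + 1)).1.getD n false = _
  rw [chainB_succ, List.getD_append_right _ _ _ _ (by rw [chainB_length])]
  simp [chainB_length]

lemma pfxL_succ (x : ℕ → Bool) (n : ℕ) : pfxL x (n + 1) = pfxL x n ++ [x n] := by
  apply List.ext_getElem
  · simp [pfxL]
  · intro i h1 h2
    simp only [pfxL, List.getElem_ofFn]
    rcases lt_or_ge i n with h | h
    · rw [List.getElem_append_left (by simpa [pfxL] using h)]
      simp [pfxL]
    · have : i = n := by simp [pfxL] at h1; omega
      subst this
      rw [List.getElem_append_right (by simp [pfxL])]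
      simp [pfxL]

lemma pfxL_branchOf (X : Set (List Bool)) (h0 : (extSet X []).Infinite) (n : ℕ) :
    pfxL (branchOf X h0) n = (chainB X h0 n).1 := by
  induction n with
  | zero => simp [pfxL, chainB]
  | succ n ih =>
    rw [pfxL_succ, ih, chainB_succ, branchOf_eq]

lemma branchOf_spec (X : Set (List Bool)) (h0 : (extSet X []).Infinite) :
    ∀ n, {u ∈ X | pfxL (branchOf X h0) n <+: u}.Infinite := by
  intro n
  rw [pfxL_branchOf X h0 n]
  exact (chainB X h0 n).2

end Branch

section Topology

lemma cylB_isOpen (s : List Bool) : IsOpen (cylB s) := by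
  have : cylB s = ⋂ i ∈ Finset.range s.length, {x : ℕ → Bool | x i = s.getD i false} := by
    ext x
    simp only [cylB, Set.mem_setOf_eq, Set.mem_iInter, Finset.mem_range]
    constructor
    · intro h i hi
      rw [List.getD_eq_getElem _ _ hi]
      exact h i hi
    · intro h i hi
      rw [← List.getD_eq_getElem _ false hi]
      exact h i hi
  rw [this]
  refine isOpen_biInter_finset fun i _ => ?_
  have : {x : ℕ → Bool | x i = s.getD i false} = (fun x : ℕ → Bool => x i) ⁻¹' {s.getD i false} := rfl
  rw [this]
  exact (continuous_apply i).isOpen_preimage _ (isOpen_discrete _)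

lemma cylB_nonempty (s : List Bool) : (cylB s).Nonempty := by
  refine ⟨fun i => s.getD i false, fun i hi => ?_⟩
  exact List.getD_eq_getElem _ _ hi

lemma TNwd_of_closed_nwd {N : Set (ℕ → Bool)} (hc : IsClosed N) (hN : IsNowhereDense N) :
    TNwd N := by
  intro s
  have hx : ∃ x ∈ cylB s, x ∉ N := by
    by_contra h
    push_neg at h
    have h1 : cylB s ⊆ interior (closure N) :=
      interior_maximal (fun x hx => subset_closure (h x hx)) (cylB_isOpen s)
    rw [hN] at h1
    exact (cylB_nonempty s).ne_empty (Set.subset_empty_iff.mp h1)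
  obtain ⟨x, hxs, hxN⟩ := hx
  have hopen : IsOpen Nᶜ := hc.isOpen_compl
  obtain ⟨I, u, hu, hsub⟩ := isOpen_pi_iff.mp hopen x hxN
  set m := max (I.sup id + 1) s.length with hm
  refine ⟨pfxL x m, prefix_pfxL_of_mem_cylB hxs (le_max_right _ _), ?_⟩
  intro z hz hzN
  have : z ∈ (I : Set ℕ).pi u := by
    intro i hi
    have him : i < m := by
      have : i ≤ I.sup id := Finset.le_sup (f := id) hi
      omega
    have := hz i (by simpa using him)
    simp only [pfxL, List.getElem_ofFn] at this
    rw [this]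
    exact (hu i hi).2
  exact hsub this hzN

end Topology

section Covers

def CovC (f : ℕ → ℕ) (K : ℕ) : Set (ℕ → Bool) := {x | ∀ n ≥ K, ∃ m, n < m ∧ m ≤ f n ∧ x m = true}

def CovE (K : ℕ) : Set (ℕ → Bool) := {x | ∀ m ≥ K, x m = false}

lemma TNwd_CovE (K : ℕ) : TNwd (CovE K) := by
  intro s
  refine ⟨s ++ (List.replicate K false ++ [true]), List.prefix_append _ _, ?_⟩
  intro x hx hxE
  have hlen : s.length + K < (s ++ (List.replicate K false ++ [true])).length := by simp
  have := hx (s.length + K) hlen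
  rw [List.getElem_append_right (by omega)] at this
  rw [List.getElem_append_right (by simp)] at this
  simp at this
  have h2 : x (s.length + K) = false := hxE (s.length + K) (by omega)
  rw [h2] at this
  exact Bool.false_ne_true this

lemma TNwd_CovC (f : ℕ → ℕ) (K : ℕ) : TNwd (CovC f K) := by
  intro s
  set n₀ := max s.length K with hn₀
  refine ⟨s ++ List.replicate (f n₀ + 1 - s.length) false, List.prefix_append _ _, ?_⟩
  intro x hx hxC
  obtain ⟨m, hm1, hm2, hm3⟩ := hxC n₀ (le_max_right _ _)
  have hms : s.length ≤ m := by omega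
  have hmt : m < (s ++ List.replicate (f n₀ + 1 - s.length) false).length := by
    simp; omega
  have := hx m hmt
  rw [List.getElem_append_right hms] at this
  simp [List.getElem_replicate] at this
  rw [hm3] at this
  exact Bool.false_ne_true this.symm

noncomputable def gx (x : ℕ → Bool) (hx : {m | x m = true}.Infinite) (n : ℕ) : ℕ :=
  sInf {m | n < m ∧ x m = true}

lemma gx_spec (x : ℕ → Bool) (hx : {m | x m = true}.Infinite) (n : ℕ) :
    n < gx x hx n ∧ x (gx x hx n) = true := by
  have hne : {m | n < m ∧ x m = true}.Nonempty := by
    obtain ⟨m, hm, hmn⟩ := exists_gt_of_infinite hx n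
    exact ⟨m, hmn, hm⟩
  exact Nat.sInf_mem hne

end Covers

section CardinalHelpers

universe u

lemma mk_le_mul_aleph0 {α β : Type u} (f : α → β) (h : ∀ b, {a | f a = b}.Countable) :
    #α ≤ #β * ℵ₀ := by
  have e : #α = Cardinal.sum (fun b : β => #{a | f a = b}) := by
    rw [← Cardinal.mk_sigma]
    exact Cardinal.mk_congr (Equiv.sigmaFiberEquiv f).symm
  rw [e]
  calc Cardinal.sum (fun b : β => #{a | f a = b})
      ≤ Cardinal.sum (fun _ : β => ℵ₀) := by
        apply Cardinal.sum_le_sum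
        intro b
        have := (h b).to_subtype
        exact Cardinal.mk_le_aleph0
    _ = #β * ℵ₀ := by simp [Cardinal.sum_const']

lemma aleph1_le_of_not_countable {α : Type u} {S : Set α} (h : ¬ S.Countable) :
    Cardinal.aleph 1 ≤ #S := by
  have := (Cardinal.countable_iff_lt_aleph_one S).not.mp h
  exact not_lt.mp this

end CardinalHelpers

lemma eventually_not_mem_of_finite {S : Set ℕ} (h : S.Finite) : ∃ K, ∀ n ≥ K, n ∉ S := by
  obtain ⟨B, hB⟩ := h.bddAbove
  exact ⟨B + 1, fun n hn hmem => by have := hB hmem; omega⟩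

section Main

variable {κ : Cardinal} {𝒳 : Set (Set (List Bool))}

lemma lemmaL (hκ : Cardinal.aleph 1 < κ)
    (hinf : ∀ X ∈ 𝒳, X.Infinite)
    (hcard : Cardinal.mk 𝒳 = κ)
    (hLuzin : ∀ A : Set (List Bool), IsNwdTree A → {X ∈ 𝒳 | (X ∩ A).Infinite}.Countable)
    (ι : Type) (hι : #ι ≤ Cardinal.aleph 1) (F : ι → ℕ → ℕ) :
    ∃ g : ℕ → ℕ, ∀ i, {n | F i n ≤ g n}.Infinite := by
  by_contra hcon
  push_neg at hcon
  have hdom : ∀ g : ℕ → ℕ, ∃ i, {n | F i n ≤ g n}.Finite := by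
    intro g; obtain ⟨i, hi⟩ := hcon g; exact ⟨i, hi⟩
  classical
  set Cov : ι × ℕ × Bool → Set (ℕ → Bool) :=
    fun p => if p.2.2 then CovC (F p.1) p.2.1 else CovE p.2.1 with hCov
  have hTN : ∀ p, TNwd (Cov p) := by
    rintro ⟨i, K, b⟩
    cases b
    · simpa [hCov] using TNwd_CovE K
    · simpa [hCov] using TNwd_CovC (F i) K
  have hcover : ∀ x : ℕ → Bool, ∃ p, x ∈ Cov p := by
    intro x
    by_cases hfin : {m | x m = true}.Infinite
    · obtain ⟨i, hi⟩ := hdom (gx x hfin)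
      obtain ⟨K, hK⟩ := eventually_not_mem_of_finite hi
      refine ⟨(i, K, true), ?_⟩
      show x ∈ CovC (F i) K
      intro n hn
      refine ⟨gx x hfin n, (gx_spec x hfin n).1, ?_, (gx_spec x hfin n).2⟩
      have := hK n hn
      simp only [Set.mem_setOf_eq, not_le] at this
      omega
    · obtain ⟨i0, _⟩ := hdom (fun _ => 0)
      obtain ⟨K, hK⟩ := eventually_not_mem_of_finite (Set.not_infinite.mp hfin)
      refine ⟨(i0, K, false), ?_⟩
      show x ∈ CovE K
      intro m hm
      have := hK m hm
      simpa using this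
  have h0 : ∀ X : ↥𝒳, (extSet X.1 []).Infinite := fun X => by
    simpa [extSet] using hinf X.1 X.2
  set Φ : ↥𝒳 → ℕ → Bool := fun X => branchOf X.1 (h0 X) with hΦ
  have hbr : ∀ (X : ↥𝒳) n, {u ∈ X.1 | pfxL (Φ X) n <+: u}.Infinite :=
    fun X => branchOf_spec X.1 (h0 X)
  have hfx : ∀ X : ↥𝒳, ∃ f : ℕ → ℕ, ∀ n, ∃ u ∈ X.1, pfxL (Φ X) n <+: u ∧ u.length ≤ f n := by
    intro X
    refine ⟨fun n => ((hbr X n).nonempty.choose).length, fun n => ?_⟩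
    obtain ⟨h1, h2⟩ := (hbr X n).nonempty.choose_spec
    exact ⟨_, h1, h2, le_refl _⟩
  choose fx hfxspec using hfx
  have hΦC : ∀ X : ↥𝒳, ∀ p, Φ X ∈ Cov p → ∀ i, {n | fx X n ≤ F i n}.Infinite →
      (X.1 ∩ ANG (Cov p) (F i)).Infinite := by
    intro X p hp i hio
    apply catch_lemma hp
    apply Set.Infinite.mono _ hio
    intro n hn
    obtain ⟨u, hu1, hu2, hu3⟩ := hfxspec X n
    exact ⟨u, hu1, hu2, le_trans hu3 hn⟩
  have key : ∀ X : ↥𝒳, ∃ p : (ι × ℕ × Bool) × ι, (X.1 ∩ ANG (Cov p.1) (F p.2)).Infinite := by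
    intro X
    obtain ⟨p, hp⟩ := hcover (Φ X)
    obtain ⟨i, hi⟩ := hdom (fx X)
    obtain ⟨K, hK⟩ := eventually_not_mem_of_finite hi
    refine ⟨(p, i), hΦC X p hp i ?_⟩
    apply Set.Infinite.mono (s := Set.Ici K) _ (Set.Ici_infinite K)
    intro n hn
    have := hK n hn
    simp only [Set.mem_setOf_eq, not_le] at this
    exact le_of_lt this
  choose Ψ hΨ using key
  have hfib : ∀ p, {X : ↥𝒳 | Ψ X = p}.Countable := by
    intro p
    have hA : IsNwdTree (ANG (Cov p.1) (F p.2)) := ANG_nwd (hTN p.1) _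
    have hcnt : Countable ↥{X ∈ 𝒳 | (X ∩ ANG (Cov p.1) (F p.2)).Infinite} :=
      (hLuzin _ hA).to_subtype
    rw [← Set.countable_coe_iff]
    have hmap : ∀ X : ↥{X : ↥𝒳 | Ψ X = p},
        X.1.1 ∈ {X ∈ 𝒳 | (X ∩ ANG (Cov p.1) (F p.2)).Infinite} := by
      rintro ⟨X, hX⟩
      have := hΨ X
      rw [hX] at this
      exact ⟨X.2, this⟩
    have hinj : Function.Injective
        (fun X : ↥{X : ↥𝒳 | Ψ X = p} =>
          (⟨X.1.1, hmap X⟩ : ↥{X ∈ 𝒳 | (X ∩ ANG (Cov p.1) (F p.2)).Infinite})) := by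
      rintro ⟨⟨X, hX⟩, h1⟩ ⟨⟨X', hX'⟩, h2⟩ h
      simp only [Subtype.mk.injEq] at h ⊢
      exact h
    exact hinj.countable
  have hle := mk_le_mul_aleph0 Ψ hfib
  have hJ : #((ι × ℕ × Bool) × ι) ≤ Cardinal.aleph 1 := by
    have e : #((ι × ℕ × Bool) × ι) = #ι * (ℵ₀ * 2) * #ι := by
      simp [Cardinal.mk_prod, Cardinal.lift_id, Cardinal.mk_bool, mul_assoc]
    rw [e]
    have h2 : (ℵ₀ * 2 : Cardinal) ≤ Cardinal.aleph 1 := by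
      have : (2 : Cardinal) ≤ ℵ₀ := by
        exact le_of_lt (Cardinal.nat_lt_aleph0 2)
      calc (ℵ₀ * 2 : Cardinal) ≤ ℵ₀ * ℵ₀ := by gcongr
        _ = ℵ₀ := Cardinal.mul_eq_self le_rfl
        _ ≤ Cardinal.aleph 1 := Cardinal.aleph0_le_aleph 1
    calc #ι * (ℵ₀ * 2) * #ι
        ≤ Cardinal.aleph 1 * Cardinal.aleph 1 * Cardinal.aleph 1 :=
          mul_le_mul' (mul_le_mul' hι h2) hι
      _ = Cardinal.aleph 1 := by
          rw [Cardinal.mul_eq_self (Cardinal.aleph0_le_aleph 1),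
            Cardinal.mul_eq_self (Cardinal.aleph0_le_aleph 1)]
  have hfinal : #↥𝒳 ≤ Cardinal.aleph 1 := by
    calc #↥𝒳 ≤ #((ι × ℕ × Bool) × ι) * ℵ₀ := hle
      _ ≤ Cardinal.aleph 1 * ℵ₀ := by gcongr
      _ = Cardinal.aleph 1 := by
          rw [Cardinal.mul_eq_max (Cardinal.aleph0_le_aleph 1) le_rfl]
          exact max_eq_left (Cardinal.aleph0_le_aleph 1)
  rw [hcard] at hfinal
  exact absurd hκ (not_lt_of_ge hfinal)

end Main

section Main2

variable {κ : Cardinal} {𝒳 : Set (Set (List Bool))}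

noncomputable def PhiX (𝒳 : Set (Set (List Bool))) (hinf : ∀ X ∈ 𝒳, X.Infinite) (X : ↥𝒳) :
    ℕ → Bool :=
  branchOf X.1 (by simpa [extSet] using hinf X.1 X.2)

lemma PhiX_spec (hinf : ∀ X ∈ 𝒳, X.Infinite) (X : ↥𝒳) (n : ℕ) :
    {u ∈ X.1 | pfxL (PhiX 𝒳 hinf X) n <+: u}.Infinite :=
  branchOf_spec X.1 _ n

lemma KB (hκ : Cardinal.aleph 1 < κ)
    (hinf : ∀ X ∈ 𝒳, X.Infinite)
    (hcard : Cardinal.mk 𝒳 = κ)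
    (hLuzin : ∀ A : Set (List Bool), IsNwdTree A → {X ∈ 𝒳 | (X ∩ A).Infinite}.Countable)
    (C : Set (ℕ → Bool)) (hC : TNwd C) :
    {X : ↥𝒳 | PhiX 𝒳 hinf X ∈ C}.Countable := by
  by_contra hcnt
  have h1 : Cardinal.aleph 1 ≤ #↥{X : ↥𝒳 | PhiX 𝒳 hinf X ∈ C} :=
    aleph1_le_of_not_countable hcnt
  obtain ⟨T, hT⟩ := Cardinal.le_mk_iff_exists_set.mp h1
  have hfx : ∀ X : ↥𝒳, ∃ f : ℕ → ℕ, ∀ n, ∃ u ∈ X.1,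
      pfxL (PhiX 𝒳 hinf X) n <+: u ∧ u.length ≤ f n := by
    intro X
    refine ⟨fun n => ((PhiX_spec hinf X n).nonempty.choose).length, fun n => ?_⟩
    obtain ⟨hh1, hh2⟩ := (PhiX_spec hinf X n).nonempty.choose_spec
    exact ⟨_, hh1, hh2, le_refl _⟩
  choose fx hfxspec using hfx
  obtain ⟨g, hg⟩ := lemmaL hκ hinf hcard hLuzin (↥T) (le_of_eq hT)
    (fun t => fx t.1.1)
  have hA : IsNwdTree (ANG C g) := ANG_nwd hC g
  have hcatch : ∀ t : ↥T, (t.1.1.1 ∩ ANG C g).Infinite := by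
    intro t
    apply catch_lemma (t.1.2 : PhiX 𝒳 hinf t.1.1 ∈ C)
    apply Set.Infinite.mono _ (hg t)
    intro n hn
    obtain ⟨u, hu1, hu2, hu3⟩ := hfxspec t.1.1 n
    exact ⟨u, hu1, hu2, le_trans hu3 hn⟩
  have hcnt2 : Countable ↥{X ∈ 𝒳 | (X ∩ ANG C g).Infinite} :=
    (hLuzin _ hA).to_subtype
  have hinj : Function.Injective
      (fun t : ↥T => (⟨t.1.1.1, ⟨t.1.1.2, hcatch t⟩⟩ :
        ↥{X ∈ 𝒳 | (X ∩ ANG C g).Infinite})) := by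
    rintro t1 t2 h
    simp only [Subtype.mk.injEq] at h
    exact Subtype.ext (Subtype.ext (Subtype.ext h))

  have : Countable ↥T := hinj.countable
  have hle : #↥T ≤ ℵ₀ := Cardinal.mk_le_aleph0
  rw [hT] at hle
  exact absurd (lt_of_lt_of_le Cardinal.aleph0_lt_aleph_one hle) (lt_irrefl _)

end Main2

theorem stmt19 (κ : Cardinal) (hκ : Cardinal.aleph 1 < κ)
    (𝒳 : Set (Set (List Bool)))
    (hinf : ∀ X ∈ 𝒳, X.Infinite)
    (hcard : Cardinal.mk 𝒳 = κ)
    (hLuzin : ∀ A : Set (List Bool), IsNwdTree A → {X ∈ 𝒳 | (X ∩ A).Infinite}.Countable) :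
    ∃ Y : Set (ℕ → Bool), Cardinal.mk Y = κ ∧
      ∀ M : Set (ℕ → Bool), IsMeagre M → (Y ∩ M).Countable := by
  classical
  set Φ : ↥𝒳 → ℕ → Bool := PhiX 𝒳 hinf with hΦ
  set Y : Set (ℕ → Bool) := Set.range Φ with hY
  have hYC : ∀ C : Set (ℕ → Bool), TNwd C → (Y ∩ C).Countable := by
    intro C hC
    have h1 : Y ∩ C ⊆ Φ '' {X : ↥𝒳 | Φ X ∈ C} := by
      rintro y ⟨⟨X, rfl⟩, hyC⟩
      exact ⟨X, hyC, rfl⟩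
    exact ((KB hκ hinf hcard hLuzin C hC).image Φ).mono h1
  refine ⟨Y, ?_, ?_⟩
  · -- cardinality
    have hle : #↥Y ≤ κ := by
      rw [← hcard]
      exact Cardinal.mk_range_le
    have hfib : ∀ y : ↥Y, {X : ↥𝒳 | (⟨Φ X, Set.mem_range_self X⟩ : ↥Y) = y}.Countable := by
      intro y
      have : {X : ↥𝒳 | (⟨Φ X, Set.mem_range_self X⟩ : ↥Y) = y} ⊆
          {X : ↥𝒳 | Φ X ∈ ({y.1} : Set (ℕ → Bool))} := by
        intro X hX
        simp only [Set.mem_setOf_eq] at hX ⊢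
        rw [← hX]
        rfl
      exact (KB hκ hinf hcard hLuzin _ (TNwd_singleton y.1)).mono this
    have hge : #↥𝒳 ≤ #↥Y * ℵ₀ :=
      mk_le_mul_aleph0 (fun X => (⟨Φ X, Set.mem_range_self X⟩ : ↥Y)) hfib
    rw [hcard] at hge
    rcases le_or_gt ℵ₀ #↥Y with h | h
    · have : #↥Y * ℵ₀ = #↥Y := by
        rw [Cardinal.mul_eq_max h le_rfl]
        exact max_eq_left h
      rw [this] at hge
      exact le_antisymm hle hge
    · exfalso
      have : #↥Y * ℵ₀ ≤ ℵ₀ * ℵ₀ := by gcongr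
      rw [Cardinal.mul_eq_self le_rfl] at this
      have hκle : κ ≤ ℵ₀ := le_trans hge this
      exact absurd hκ (not_lt_of_ge (le_trans hκle (Cardinal.aleph0_le_aleph 1)))
  · intro M hM
    obtain ⟨S, hSnwd, hScnt, hSsub⟩ := isMeagre_iff_countable_union_isNowhereDense.mp hM
    have hsub : Y ∩ M ⊆ ⋃ t ∈ S, (Y ∩ closure t) := by
      rintro y ⟨hyY, hyM⟩
      obtain ⟨t, htS, hyt⟩ := hSsub hyM
      exact Set.mem_biUnion htS ⟨hyY, subset_closure hyt⟩
    refine (Set.Countable.biUnion hScnt ?_).mono hsub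
    intro t ht
    exact hYC (closure t) (TNwd_of_closed_nwd isClosed_closure ((hSnwd t ht).closure))
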